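/- Let G be a countable discrete group and f an n×n matrix over ℤ[G] admitting an ℓ² formal inverse. Then the homoclinic group Δ(X_f) = { θ ∈ X_f : g·θ → 0 along the cofinite filter on G } is dense in X_f, where convergence is in the product topology of (𝕋^G)^{⊕n}. -/

import Mathlib

open scoped Classical ENNReal

noncomputable section

/-- Convolution of a finitely supported `a : ℂ[G]` with `ξ : G → ℂ`:
`(a*ξ)(g) = ∑_{h} a(h) ξ(h⁻¹g)`. -/
def fconv {G : Type*} [Group G] (a : G →₀ ℂ) (ξ : G → ℂ) : G → ℂ :=
  fun g => a.sum fun h c => c * ξ (h⁻¹ * g)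

/-- Convolution of `ξ : G → ℂ` with a finitely supported `a : ℂ[G]`. -/
def fconvR {G : Type*} [Group G] (ξ : G → ℂ) (a : G →₀ ℂ) : G → ℂ :=
  fun g => a.sum fun h c => ξ (g * h⁻¹) * c

/-- The matrix `1̂` with diagonal entries `δ_e` and zero off-diagonal entries. -/
def oneHat (G : Type*) [Group G] (n : ℕ) : Matrix (Fin n) (Fin n) (G → ℂ) :=
  fun i j g => if i = j ∧ g = 1 then 1 else 0

/-- `(fξ)_{ij} = ∑_k f_{ik} * ξ_{kj}`. -/
def matConv {G : Type*} [Group G] {n : ℕ} (f : Matrix (Fin n) (Fin n) (G →₀ ℂ))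
    (ξ : Matrix (Fin n) (Fin n) (G → ℂ)) : Matrix (Fin n) (Fin n) (G → ℂ) :=
  fun i j => ∑ k, fconv (f i k) (ξ k j)

/-- `(ξf)_{ij} = ∑_k ξ_{ik} * f_{kj}`. -/
def matConvR {G : Type*} [Group G] {n : ℕ} (ξ : Matrix (Fin n) (Fin n) (G → ℂ))
    (f : Matrix (Fin n) (Fin n) (G →₀ ℂ)) : Matrix (Fin n) (Fin n) (G → ℂ) :=
  fun i j => ∑ k, fconvR (ξ i k) (f k j)

/-- A finitely supported integer-valued function regarded as an element of `ℂ[G]`. -/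
def castZC {G : Type*} [Group G] (a : MonoidAlgebra ℤ G) : G →₀ ℂ :=
  Finsupp.mapRange (Int.cast : ℤ → ℂ) Int.cast_zero a.coeff

/-- `X_f`: the closed subgroup of `(𝕋^G)^{⊕n}` of all `θ` annihilating
`r(f)(ℤ[G]^{⊕n})` under the natural pairing, where `(r(f)β)(l) = ∑_k β(k) * f_{kl}`. -/
def Xf {G : Type*} [Group G] {n : ℕ} (f : Matrix (Fin n) (Fin n) (MonoidAlgebra ℤ G)) :
    Set (Fin n → G → AddCircle (1 : ℝ)) :=
  {θ | ∀ β : Fin n → MonoidAlgebra ℤ G,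
    ∑ l, Finsupp.sum (∑ k, β k * f k l).coeff (fun g c => c • θ l g) = 0}

instance malgCoeFun {G : Type*} : CoeFun (MonoidAlgebra ℤ G) (fun _ => G → ℤ) :=
  ⟨fun a => a.coeff⟩


open MeasureTheory


section Torus

variable {κ : Type*} [Fintype κ]

local instance : Fact ((0:ℝ) < 1) := ⟨one_pos⟩

omit [Fintype κ] in
lemma toCircle_sum (s : Finset κ) (a : κ → AddCircle (1:ℝ)) :
    AddCircle.toCircle (∑ i ∈ s, a i) = ∏ i ∈ s, AddCircle.toCircle (a i) := by
  classical
  induction s using Finset.cons_induction with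
  | empty => simp
  | cons i s hi ih => rw [Finset.sum_cons, Finset.prod_cons, AddCircle.toCircle_add, ih]

lemma toCircle_neg' (s : AddCircle (1:ℝ)) :
    AddCircle.toCircle (-s) = (AddCircle.toCircle s)⁻¹ :=
  eq_inv_of_mul_eq_one_left (by rw [← AddCircle.toCircle_add]; simp)

/-- The character of the finite torus attached to an integer vector. -/
def charE (χ : κ → ℤ) : C((κ → AddCircle (1:ℝ)), ℂ) :=
  ⟨fun y => (AddCircle.toCircle (∑ i, χ i • y i) : ℂ), by
    apply continuous_subtype_val.comp
    exact AddCircle.continuous_toCircle.comp <| continuous_finset_sum _ fun i _ =>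
        (continuous_zsmul (χ i)).comp (continuous_apply i)⟩

lemma charE_apply (χ : κ → ℤ) (y : κ → AddCircle (1:ℝ)) :
    charE χ y = (AddCircle.toCircle (∑ i, χ i • y i) : ℂ) := rfl

lemma charE_zero : (charE (0 : κ → ℤ)) = 1 := by
  ext y; simp [charE_apply]

lemma charE_add (χ χ' : κ → ℤ) : charE (χ + χ') = charE χ * charE χ' := by
  ext y
  simp only [charE_apply, ContinuousMap.mul_apply, Pi.add_apply, add_zsmul,
    Finset.sum_add_distrib, AddCircle.toCircle_add, Circle.coe_mul]

lemma charE_norm (χ : κ → ℤ) (y : κ → AddCircle (1:ℝ)) : ‖charE χ y‖ = 1 := by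
  simp [charE_apply, Circle.norm_coe]

lemma charE_star (χ : κ → ℤ) : star (charE χ) = charE (-χ) := by
  ext y
  rw [ContinuousMap.star_apply, charE_apply, charE_apply, RCLike.star_def,
    ← Circle.coe_inv_eq_conj, ← toCircle_neg']
  congr 2
  simp

end Torus
section Torus2

variable {κ : Type*} [Fintype κ]

/-- The star subalgebra of `C(𝕋^κ, ℂ)` spanned by the characters. -/
def charAlg (κ : Type*) [Fintype κ] : StarSubalgebra ℂ C((κ → AddCircle (1:ℝ)), ℂ) where
  toSubalgebra := (Submodule.span ℂ (Set.range (charE (κ := κ)))).toSubalgebra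
    (Submodule.subset_span ⟨0, charE_zero⟩)
    (by
      intro x y hx hy
      induction hx using Submodule.span_induction generalizing y with
      | mem x hxm =>
        obtain ⟨χ, rfl⟩ := hxm
        induction hy using Submodule.span_induction with
        | mem y hym => obtain ⟨χ', rfl⟩ := hym
                       exact charE_add χ χ' ▸ Submodule.subset_span ⟨χ + χ', rfl⟩
        | zero => simpa using Submodule.zero_mem _
        | add a b _ _ ha hb => rw [mul_add]; exact Submodule.add_mem _ ha hb
        | smul c a _ ha => rw [mul_smul_comm]; exact Submodule.smul_mem _ _ ha
      | zero => simpa using Submodule.zero_mem _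
      | add a b _ _ ha hb => rw [add_mul]; exact Submodule.add_mem _ (ha y hy) (hb y hy)
      | smul c a _ ha => rw [smul_mul_assoc]; exact Submodule.smul_mem _ _ (ha y hy))
  star_mem' := by
    intro x hx
    simp only [Subalgebra.mem_carrier] at *
    induction hx using Submodule.span_induction with
    | mem x hxm => obtain ⟨χ, rfl⟩ := hxm
                   rw [charE_star]; exact Submodule.subset_span ⟨-χ, rfl⟩
    | zero => rw [star_zero]; exact Submodule.zero_mem _
    | add a b _ _ ha hb => rw [star_add]; exact Submodule.add_mem _ ha hb
    | smul c a _ ha => rw [star_smul]; exact Submodule.smul_mem _ _ ha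

lemma charE_mem_charAlg (χ : κ → ℤ) : charE χ ∈ charAlg κ :=
  Submodule.subset_span ⟨χ, rfl⟩

lemma charAlg_separates : (charAlg κ).SeparatesPoints := by
  intro x y hxy
  obtain ⟨i, hi⟩ := Function.ne_iff.mp hxy
  refine ⟨_, ⟨charE (Pi.single i 1), charE_mem_charAlg _, rfl⟩, ?_⟩
  have key : ∀ z : κ → AddCircle (1:ℝ), charE (Pi.single i 1) z =
      (AddCircle.toCircle (z i) : ℂ) := by
    intro z
    rw [charE_apply]
    congr 2
    rw [Finset.sum_eq_single i]
    · simp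
    · intro b _ hb; simp [Pi.single_eq_of_ne hb]
    · simp
  show charE (Pi.single i 1) x ≠ charE (Pi.single i 1) y
  rw [key, key]
  simp only [ne_eq, Circle.coe_inj]
  exact fun h => hi (AddCircle.injective_toCircle one_ne_zero h)

end Torus2
section Torus3

set_option maxHeartbeats 1000000
set_option synthInstance.maxHeartbeats 1000000

lemma charE_apply_add {κ : Type*} [Fintype κ] (χ : κ → ℤ) (a b : κ → AddCircle (1:ℝ)) :
    charE χ (a + b) = charE χ a * charE χ b := by
  simp only [charE_apply, Pi.add_apply, smul_add, Finset.sum_add_distrib,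
    AddCircle.toCircle_add, Circle.coe_mul]

lemma charE_eq_one_iff {κ : Type*} [Fintype κ] (χ : κ → ℤ) (y : κ → AddCircle (1:ℝ)) :
    charE χ y = 1 ↔ ∑ i, χ i • y i = 0 := by
  rw [charE_apply]
  constructor
  · intro h
    have h' : AddCircle.toCircle (∑ i, χ i • y i) = 1 := by
      apply Circle.coe_injective
      simpa using h
    exact AddCircle.injective_toCircle one_ne_zero
      (by rw [h', AddCircle.toCircle_zero])
  · intro h; rw [h]; simp

lemma torus_char_separation {κ : Type*} [Fintype κ] (K : AddSubgroup (κ → AddCircle (1:ℝ)))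
    (hcl : IsClosed (K : Set (κ → AddCircle (1:ℝ)))) (x : κ → AddCircle (1:ℝ)) (hx : x ∉ K) :
    ∃ χ : κ → ℤ, (∀ k ∈ K, ∑ i, χ i • k i = 0) ∧ ∑ i, χ i • x i ≠ 0 := by
  haveI : Fact ((0:ℝ) < 1) := ⟨one_pos⟩
  by_contra hcon
  push_neg at hcon
  -- instances on K
  haveI : CompactSpace ↥K := isCompact_iff_compactSpace.mp hcl.isCompact
  haveI : LocallyCompactSpace ↥K := inferInstance
  letI : MeasurableSpace ↥K := borel _
  haveI : BorelSpace ↥K := ⟨rfl⟩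
  haveI : Nonempty ↥K := ⟨0⟩
  let μ : MeasureTheory.Measure ↥K := MeasureTheory.Measure.addHaarMeasure ⊤
  haveI : MeasureTheory.IsProbabilityMeasure μ := by
    constructor
    simpa using MeasureTheory.Measure.addHaarMeasure_self (K₀ := (⊤ : TopologicalSpace.PositiveCompacts ↥K))
  -- Urysohn function : 0 on x + K, 1 on K
  have hKcomp : IsCompact (K : Set (κ → AddCircle (1:ℝ))) := hcl.isCompact
  have hxK : IsCompact ((fun k => x + k) '' (K : Set (κ → AddCircle (1:ℝ)))) :=
    hKcomp.image (continuous_const.add continuous_id)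
  have hdisj : Disjoint ((fun k => x + k) '' (K : Set (κ → AddCircle (1:ℝ))))
      (K : Set (κ → AddCircle (1:ℝ))) := by
    rw [Set.disjoint_left]
    rintro a ⟨k, hk, rfl⟩ ha
    exact hx (by simpa using K.sub_mem ha hk)
  obtain ⟨fr, hfr0, hfr1, hfr01⟩ := exists_continuous_zero_one_of_isCompact hxK hcl hdisj
  let F : C((κ → AddCircle (1:ℝ)), ℂ) := ⟨fun y => ((fr y : ℝ) : ℂ),
    Complex.continuous_ofReal.comp fr.continuous⟩
  -- Stone-Weierstrass approximation
  have htop := ContinuousMap.starSubalgebra_topologicalClosure_eq_top_of_separatesPoints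
    (charAlg κ) charAlg_separates
  have hF : F ∈ closure ((charAlg κ) : Set C((κ → AddCircle (1:ℝ)), ℂ)) := by
    have : F ∈ (charAlg κ).topologicalClosure := by rw [htop]; trivial
    exact this
  obtain ⟨P, hPA, hPF⟩ := Metric.mem_closure_iff.mp hF (1/4) (by norm_num)
  have hPspan : P ∈ Submodule.span ℂ (Set.range (charE (κ := κ))) := hPA
  obtain ⟨c, hcP⟩ := Finsupp.mem_span_range_iff_exists_finsupp.mp hPspan
  -- integrability facts
  have hintC : ∀ (u : ↥K → ℂ), Continuous u → MeasureTheory.Integrable u μ := fun u hu =>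
    hu.integrable_of_hasCompactSupport (isClosed_tsupport _).isCompact
  -- character integrals
  set J : (κ → ℤ) → ℂ := fun χ => ∫ k : ↥K, charE χ (k : κ → AddCircle (1:ℝ)) ∂μ with hJdef
  have hconE : ∀ χ : κ → ℤ, Continuous fun k : ↥K => charE χ (k : κ → AddCircle (1:ℝ)) :=
    fun χ => (charE χ).continuous.comp continuous_subtype_val
  have hJ : ∀ χ : κ → ℤ, J χ ≠ 0 → ∀ k0 : ↥K, charE χ (k0 : κ → AddCircle (1:ℝ)) = 1 := by
    intro χ hJχ k0
    have h1 : ∫ k : ↥K, charE χ ((k0 + k : ↥K) : κ → AddCircle (1:ℝ)) ∂μ = J χ :=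
      MeasureTheory.integral_add_left_eq_self (μ := μ)
        (fun z : ↥K => charE χ (z : κ → AddCircle (1:ℝ))) k0
    have h2 : (fun k : ↥K => charE χ ((k0 + k : ↥K) : κ → AddCircle (1:ℝ)))
        = fun k : ↥K => charE χ (k0 : κ → AddCircle (1:ℝ)) * charE χ (k : κ → AddCircle (1:ℝ)) := by
      funext k
      rw [AddSubgroup.coe_add, charE_apply_add]
    rw [h2, MeasureTheory.integral_const_mul] at h1
    have h3 : (charE χ (k0 : κ → AddCircle (1:ℝ)) - 1) * J χ = 0 := by
      rw [sub_mul, one_mul, h1, sub_self]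
    rcases mul_eq_zero.mp h3 with h | h
    · exact sub_eq_zero.mp h
    · exact absurd h hJχ
  -- Q y = sum over characters
  have hQ : ∀ y : κ → AddCircle (1:ℝ), ∫ k : ↥K, P (y + (k : κ → AddCircle (1:ℝ))) ∂μ
      = ∑ χ ∈ c.support, c χ * charE χ y * J χ := by
    intro y
    have hPy : (fun k : ↥K => P (y + (k : κ → AddCircle (1:ℝ))))
        = fun k : ↥K => ∑ χ ∈ c.support,
            c χ * charE χ y * charE χ (k : κ → AddCircle (1:ℝ)) := by
      funext k
      conv_lhs => rw [← hcP]
      rw [Finsupp.sum]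
      rw [ContinuousMap.sum_apply]
      refine Finset.sum_congr rfl fun χ _ => ?_
      rw [ContinuousMap.smul_apply, charE_apply_add]
      rw [smul_eq_mul]; ring
    rw [hPy, MeasureTheory.integral_finset_sum _ (fun χ _ => ?_)]
    · refine Finset.sum_congr rfl fun χ _ => ?_
      rw [MeasureTheory.integral_const_mul]
    · exact hintC _ (by fun_prop)
  -- if J χ ≠ 0 then χ kills K hence kills x
  have hEq : (∑ χ ∈ c.support, c χ * charE χ x * J χ)
      = ∑ χ ∈ c.support, c χ * charE χ (0 : κ → AddCircle (1:ℝ)) * J χ := by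
    refine Finset.sum_congr rfl fun χ _ => ?_
    by_cases hJ0 : J χ = 0
    · rw [hJ0]; ring
    · have hzero : ∀ k ∈ K, ∑ i, χ i • k i = 0 := fun k hk =>
        (charE_eq_one_iff χ k).mp (hJ χ hJ0 ⟨k, hk⟩)
      have hx1 : charE χ x = 1 := (charE_eq_one_iff χ x).mpr (hcon χ hzero)
      have h01 : charE χ (0 : κ → AddCircle (1:ℝ)) = 1 :=
        (charE_eq_one_iff χ 0).mpr (by simp)
      rw [hx1, h01]
  -- estimates
  have hest : ∀ y : κ → AddCircle (1:ℝ),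
      ‖(∫ k : ↥K, P (y + (k : κ → AddCircle (1:ℝ))) ∂μ)
        - ∫ k : ↥K, F (y + (k : κ → AddCircle (1:ℝ))) ∂μ‖ ≤ 1/4 := by
    intro y
    have hi1 : MeasureTheory.Integrable (fun k : ↥K => P (y + (k : κ → AddCircle (1:ℝ)))) μ :=
      hintC _ (P.continuous.comp (continuous_const.add continuous_subtype_val))
    have hi2 : MeasureTheory.Integrable (fun k : ↥K => F (y + (k : κ → AddCircle (1:ℝ)))) μ :=
      hintC _ (F.continuous.comp (continuous_const.add continuous_subtype_val))
    rw [← MeasureTheory.integral_sub hi1 hi2]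
    have hb := MeasureTheory.norm_integral_le_of_norm_le_const (μ := μ) (C := 1/4)
      (f := fun k : ↥K => P (y + (k : κ → AddCircle (1:ℝ))) - F (y + (k : κ → AddCircle (1:ℝ))))
      (MeasureTheory.ae_of_all _ fun k => by
        have h1 : dist (P (y + (k : κ → AddCircle (1:ℝ)))) (F (y + (k : κ → AddCircle (1:ℝ))))
            ≤ dist P F := ContinuousMap.dist_apply_le_dist _
        have h2 : dist P F < 1/4 := by rw [dist_comm]; exact hPF
        calc ‖P (y + (k : κ → AddCircle (1:ℝ))) - F (y + (k : κ → AddCircle (1:ℝ)))‖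
            = dist (P (y + (k : κ → AddCircle (1:ℝ)))) (F (y + (k : κ → AddCircle (1:ℝ)))) := by
              rw [dist_eq_norm]
          _ ≤ 1/4 := le_of_lt (lt_of_le_of_lt h1 h2))
    simpa using hb
  have hFx : ∫ k : ↥K, F (x + (k : κ → AddCircle (1:ℝ))) ∂μ = 0 := by
    have hz : ∀ k : ↥K, F (x + (k : κ → AddCircle (1:ℝ))) = 0 := fun k => by
      have : fr (x + (k : κ → AddCircle (1:ℝ))) = 0 := hfr0 ⟨k, k.2, rfl⟩
      simp only [F, ContinuousMap.coe_mk, this, Complex.ofReal_zero]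
    simp only [hz, MeasureTheory.integral_zero]
  have hF0 : ∫ k : ↥K, F ((0 : κ → AddCircle (1:ℝ)) + (k : κ → AddCircle (1:ℝ))) ∂μ = 1 := by
    have hz : ∀ k : ↥K, F ((0 : κ → AddCircle (1:ℝ)) + (k : κ → AddCircle (1:ℝ))) = 1 := fun k => by
      have h1 : fr ((0 : κ → AddCircle (1:ℝ)) + (k : κ → AddCircle (1:ℝ))) = 1 := by
        have := hfr1 k.2
        simpa using this
      simp only [F, ContinuousMap.coe_mk, h1, Complex.ofReal_one]
    simp only [hz]
    simp
  have hQeq : (∫ k : ↥K, P (x + (k : κ → AddCircle (1:ℝ))) ∂μ)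
      = ∫ k : ↥K, P ((0 : κ → AddCircle (1:ℝ)) + (k : κ → AddCircle (1:ℝ))) ∂μ := by
    rw [hQ, hQ, hEq]
  have hx4 := hest x
  have h04 := hest 0
  rw [hFx] at hx4
  rw [hF0] at h04
  rw [hQeq] at hx4
  have : (1:ℝ) ≤ 1/2 := by
    have htri : ‖(1:ℂ)‖ ≤ 1/4 + 1/4 := by
      have h5 : (1:ℂ) = ((∫ k : ↥K, P ((0 : κ → AddCircle (1:ℝ)) + (k : κ → AddCircle (1:ℝ))) ∂μ) - 0)
          - ((∫ k : ↥K, P ((0 : κ → AddCircle (1:ℝ)) + (k : κ → AddCircle (1:ℝ))) ∂μ) - 1) := by ring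
      rw [h5]
      refine le_trans (norm_sub_le _ _) ?_
      exact add_le_add hx4 h04
    rw [norm_one] at htri
    linarith
  linarith

end Torus3
section Density

/-- Density criterion via finitely supported integer characters, in `𝕋^ι`. -/
lemma mem_closure_of_char {ι : Type*} (H : AddSubgroup (ι → AddCircle (1:ℝ)))
    (θ : ι → AddCircle (1:ℝ))
    (hθ : ∀ χ : ι →₀ ℤ, (∀ ψ ∈ H, (χ.sum fun i c => c • ψ i) = 0) →
      (χ.sum fun i c => c • θ i) = 0) :
    θ ∈ closure (H : Set (ι → AddCircle (1:ℝ))) := by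
  classical
  rw [mem_closure_iff]
  intro s hs hθs
  obtain ⟨I, u, huo, hsub⟩ := isOpen_pi_iff.mp hs θ hθs
  -- restriction homomorphism to coordinates in I
  let ρ : (ι → AddCircle (1:ℝ)) →+ ({ i // i ∈ I } → AddCircle (1:ℝ)) :=
    AddMonoidHom.mk' (fun ψ => fun i => ψ i) (fun _ _ => rfl)
  let Kc : AddSubgroup ({ i // i ∈ I } → AddCircle (1:ℝ)) := (H.map ρ).topologicalClosure
  have hmem : ρ θ ∈ Kc := by
    by_contra hnot
    obtain ⟨χF, hann, hne⟩ := torus_char_separation Kc (AddSubgroup.isClosed_topologicalClosure (H.map ρ) : IsClosed (Kc : Set ({ i // i ∈ I } → AddCircle (1:ℝ)))) (ρ θ) hnot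
    -- extend χF to a finitely supported character on ι
    let χ : ι →₀ ℤ := Finsupp.onFinset I (fun a => if h : a ∈ I then χF ⟨a, h⟩ else 0)
      (fun a ha => by by_contra h; simp [h] at ha)
    have hχsum : ∀ ψ : ι → AddCircle (1:ℝ),
        (χ.sum fun i c => c • ψ i) = ∑ i : { i // i ∈ I }, χF i • ψ i := by
      intro ψ
      rw [Finsupp.sum_of_support_subset χ (Finsupp.support_onFinset_subset)
        (fun i c => c • ψ i) (fun i _ => zero_smul ℤ _)]
      rw [← Finset.sum_attach I (fun a => χ a • ψ a)]
      refine Finset.sum_congr rfl fun i _ => ?_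
      have : χ (i : ι) = χF i := by simp [χ, Finsupp.onFinset_apply, i.2]
      rw [this]
    have h0 : ∀ ψ ∈ H, (χ.sum fun i c => c • ψ i) = 0 := by
      intro ψ hψ
      rw [hχsum]
      exact hann (ρ ψ) (AddSubgroup.le_topologicalClosure _ ⟨ψ, hψ, rfl⟩)
    have := hθ χ h0
    rw [hχsum] at this
    exact hne this
  -- ρ θ in the closure of the image; find an approximating element of H
  have hV : IsOpen (Set.pi Set.univ (fun i : { i // i ∈ I } => u i)) :=
    isOpen_set_pi Set.finite_univ (fun i _ => (huo i i.2).1)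
  have hθV : ρ θ ∈ Set.pi Set.univ (fun i : { i // i ∈ I } => u i) :=
    fun i _ => (huo i i.2).2
  have hclos : ρ θ ∈ closure ((H.map ρ) : Set ({ i // i ∈ I } → AddCircle (1:ℝ))) := hmem
  obtain ⟨ψF, hψF_V, hψF_mem⟩ := mem_closure_iff.mp hclos _ hV hθV
  obtain ⟨ψ0, hψ0H, hψ0eq⟩ := hψF_mem
  refine ⟨ψ0, ?_, hψ0H⟩
  apply hsub
  intro a ha
  have := hψF_V ⟨a, ha⟩ (Set.mem_univ _)
  rw [← hψ0eq] at this
  exact this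

end Density
section Algebra

variable {G : Type*} [Group G] {n : ℕ}

lemma fsum_eq (a : MonoidAlgebra ℤ G) {M : Type*} [AddCommMonoid M] (F : G → ℤ → M) :
    a.coeff.sum F = ∑ g ∈ a.coeff.support, F g (a g) := rfl

lemma malg_mul_sum {M : Type*} [AddCommGroup M] (a b : MonoidAlgebra ℤ G) (F : G → M) :
    (a * b).coeff.sum (fun g c => c • F g)
      = a.coeff.sum fun h c1 => b.coeff.sum fun s c2 => (c1 * c2) • F (h * s) := by
  rw [MonoidAlgebra.mul_def, MonoidAlgebra.coeff_finsuppSum]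
  rw [Finsupp.sum_sum_index (fun g => zero_smul ℤ (F g)) (fun g c1 c2 => add_smul c1 c2 (F g))]
  refine Finsupp.sum_congr fun h _ => ?_
  rw [MonoidAlgebra.coeff_finsuppSum]
  rw [Finsupp.sum_sum_index (fun g => zero_smul ℤ (F g)) (fun g c1 c2 => add_smul c1 c2 (F g))]
  refine Finsupp.sum_congr fun s _ => ?_
  rw [MonoidAlgebra.coeff_single]
  exact Finsupp.sum_single_index (zero_smul ℤ _)

lemma malg_mul_apply_right (a b : MonoidAlgebra ℤ G) (g : G) :
    (a * b) g = b.coeff.sum fun s c => a (g * s⁻¹) * c := by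
  classical
  rw [MonoidAlgebra.mul_apply, Finsupp.sum_comm]
  refine Finsupp.sum_congr fun s _ => ?_
  have h1 : (a.coeff.sum fun u c1 => if u * s = g then c1 * b s else 0)
      = a.coeff.sum fun u c1 => if u = g * s⁻¹ then c1 * b s else 0 := by
    refine Finsupp.sum_congr fun u _ => ?_
    congr 1
    simp [eq_mul_inv_iff_mul_eq]
  rw [h1, Finsupp.sum_ite_eq']
  by_cases hmem : g * s⁻¹ ∈ a.coeff.support
  · rw [if_pos hmem]
  · rw [if_neg hmem, Finsupp.notMem_support_iff.mp hmem, zero_mul]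

/-- real pairing between integer vectors and real configurations -/
def rpair (β : Fin n → MonoidAlgebra ℤ G) (φ : Fin n → G → ℝ) : ℝ :=
  ∑ l, (β l).coeff.sum fun g c => (c : ℝ) * φ l g

lemma tpair_eq_rpair (β : Fin n → MonoidAlgebra ℤ G) (φ : Fin n → G → ℝ) :
    (∑ l, (β l).coeff.sum fun g c => c • ((φ l g : ℝ) : AddCircle (1:ℝ)))
      = ((rpair β φ : ℝ) : AddCircle (1:ℝ)) := by
  let q : ℝ →+ AddCircle (1:ℝ) := QuotientAddGroup.mk' _
  have hq : ∀ x : ℝ, (x : AddCircle (1:ℝ)) = q x := fun x => rfl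
  rw [hq, rpair, map_sum]
  refine Finset.sum_congr rfl fun l _ => ?_
  rw [map_finsuppSum]
  refine Finsupp.sum_congr fun g _ => ?_
  rw [← zsmul_eq_mul, map_zsmul, hq]

lemma coe_int_real_eq_zero (z : ℤ) : (((z : ℝ)) : AddCircle (1:ℝ)) = 0 := by
  rw [AddCircle.coe_eq_zero_iff]
  exact ⟨z, by simp⟩

end Algebra
section Core

variable {G : Type*} [Group G] {n : ℕ}

/-- The homoclinic configuration attached to `α ∈ ℤ[G]^n`. -/
def psiMap (η : Fin n → Fin n → G → ℝ) (α : Fin n → MonoidAlgebra ℤ G) : Fin n → G → ℝ :=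
  fun l g => ∑ m, (α m).coeff.sum fun u c => (c : ℝ) * η l m (g⁻¹ * u)

lemma ite_and_split (k m : Fin n) (a : G) :
    (if k = m ∧ a = 1 then (1:ℝ) else 0)
      = (if m = k then (1:ℝ) else 0) * (if a = 1 then (1:ℝ) else 0) := by
  by_cases h1 : m = k
  · subst h1
    by_cases h2 : a = 1 <;> simp [h2]
  · have h1' : ¬ k = m := fun h => h1 h.symm
    simp [h1, h1']

lemma Tpsi_eq (f : Matrix (Fin n) (Fin n) (MonoidAlgebra ℤ G)) (η : Fin n → Fin n → G → ℝ)
    (h1R : ∀ i j g, ∑ k, (f i k).coeff.sum (fun h c => (c : ℝ) * η k j (h⁻¹ * g))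
      = if i = j ∧ g = 1 then 1 else 0)
    (α : Fin n → MonoidAlgebra ℤ G) (k : Fin n) (g : G) :
    ∑ l, (f k l).coeff.sum (fun h c => (c : ℝ) * psiMap η α l (g * h)) = ((α k g : ℤ) : ℝ) := by
  classical
  have key : ∀ (l : Fin n) (h : G), (f k l h : ℝ) * psiMap η α l (g * h)
      = ∑ m, ∑ u ∈ (α m).coeff.support, (α m u : ℝ) * ((f k l h : ℝ) * η l m (h⁻¹ * (g⁻¹ * u))) := by
    intro l h
    rw [psiMap, Finset.mul_sum]
    refine Finset.sum_congr rfl fun m _ => ?_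
    rw [fsum_eq, Finset.mul_sum]
    refine Finset.sum_congr rfl fun u _ => ?_
    have hgp : (g * h)⁻¹ * u = h⁻¹ * (g⁻¹ * u) := by
      rw [mul_inv_rev, mul_assoc]
    rw [hgp]; ring
  calc ∑ l, (f k l).coeff.sum (fun h c => (c : ℝ) * psiMap η α l (g * h))
      = ∑ l, ∑ h ∈ (f k l).coeff.support, ∑ m, ∑ u ∈ (α m).coeff.support,
          (α m u : ℝ) * ((f k l h : ℝ) * η l m (h⁻¹ * (g⁻¹ * u))) := by
        refine Finset.sum_congr rfl fun l _ => ?_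
        rw [fsum_eq]
        exact Finset.sum_congr rfl fun h _ => key l h
    _ = ∑ l, ∑ m, ∑ h ∈ (f k l).coeff.support, ∑ u ∈ (α m).coeff.support,
          (α m u : ℝ) * ((f k l h : ℝ) * η l m (h⁻¹ * (g⁻¹ * u))) := by
        exact Finset.sum_congr rfl fun l _ => Finset.sum_comm
    _ = ∑ m, ∑ l, ∑ h ∈ (f k l).coeff.support, ∑ u ∈ (α m).coeff.support,
          (α m u : ℝ) * ((f k l h : ℝ) * η l m (h⁻¹ * (g⁻¹ * u))) := Finset.sum_comm
    _ = ∑ m, ∑ l, ∑ u ∈ (α m).coeff.support, ∑ h ∈ (f k l).coeff.support,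
          (α m u : ℝ) * ((f k l h : ℝ) * η l m (h⁻¹ * (g⁻¹ * u))) := by
        exact Finset.sum_congr rfl fun m _ => Finset.sum_congr rfl fun l _ => Finset.sum_comm
    _ = ∑ m, ∑ u ∈ (α m).coeff.support, ∑ l, ∑ h ∈ (f k l).coeff.support,
          (α m u : ℝ) * ((f k l h : ℝ) * η l m (h⁻¹ * (g⁻¹ * u))) := by
        exact Finset.sum_congr rfl fun m _ => Finset.sum_comm
    _ = ∑ m, ∑ u ∈ (α m).coeff.support, (α m u : ℝ) *
          (∑ l, ∑ h ∈ (f k l).coeff.support, (f k l h : ℝ) * η l m (h⁻¹ * (g⁻¹ * u))) := by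
        refine Finset.sum_congr rfl fun m _ => Finset.sum_congr rfl fun u _ => ?_
        rw [Finset.mul_sum]
        exact Finset.sum_congr rfl fun l _ => by rw [Finset.mul_sum]
    _ = ∑ m, ∑ u ∈ (α m).coeff.support, (α m u : ℝ) *
          (if k = m ∧ (g⁻¹ * u) = 1 then (1:ℝ) else 0) := by
        refine Finset.sum_congr rfl fun m _ => Finset.sum_congr rfl fun u _ => ?_
        exact congrArg _ (h1R k m (g⁻¹ * u))
    _ = ∑ m, (if m = k then (1:ℝ) else 0) * (α m g : ℝ) := by
        refine Finset.sum_congr rfl fun m _ => ?_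
        have : ∀ u ∈ (α m).coeff.support, (α m u : ℝ) * (if k = m ∧ (g⁻¹ * u) = 1 then (1:ℝ) else 0)
            = (if m = k then (1:ℝ) else 0) * (if u = g then (α m u : ℝ) else 0) := by
          intro u _
          rw [ite_and_split]
          have : ((g⁻¹ * u = 1) = (u = g)) := by
            simp [inv_mul_eq_one, eq_comm]
          rw [this]
          by_cases h2 : u = g <;> simp [h2] <;> ring
        rw [Finset.sum_congr rfl this, ← Finset.mul_sum, Finset.sum_ite_eq']
        by_cases hg : g ∈ (α m).coeff.support
        · rw [if_pos hg]
        · rw [if_neg hg, Finsupp.notMem_support_iff.mp hg, Int.cast_zero]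
    _ = ((α k g : ℤ) : ℝ) := by
        simp only [ite_mul, one_mul, zero_mul]
        rw [Finset.sum_ite_eq' Finset.univ k (fun m => ((α m g : ℤ) : ℝ))]
        simp

end Core
open Filter
open scoped ENNReal

lemma re_tendsto_cofinite {G : Type*} (ξ : lp (fun _ : G => ℂ) 2) :
    Tendsto (fun g => ((ξ : ∀ _ : G, ℂ) g).re) cofinite (nhds 0) := by
  have hm : Memℓp (ξ : ∀ _ : G, ℂ) 2 := lp.memℓp ξ
  have hs : Summable fun g => ‖(ξ : ∀ _ : G, ℂ) g‖ ^ (2:ℝ≥0∞).toReal := hm.summable (by norm_num)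
  have hs2 : Summable fun g => ‖(ξ : ∀ _ : G, ℂ) g‖ ^ (2:ℕ) := by
    refine hs.congr fun g => ?_
    rw [show ((2:ℝ≥0∞).toReal) = ((2:ℕ):ℝ) by norm_num, Real.rpow_natCast]
  have h0 : Tendsto (fun g => ‖(ξ : ∀ _ : G, ℂ) g‖ ^ (2:ℕ)) cofinite (nhds 0) :=
    hs2.tendsto_cofinite_zero
  have h1 : Tendsto (fun g => ‖(ξ : ∀ _ : G, ℂ) g‖) cofinite (nhds 0) := by
    have hc := (Real.continuous_sqrt.tendsto 0).comp h0
    rw [Real.sqrt_zero] at hc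
    refine hc.congr fun g => ?_
    simp only [Function.comp_apply]
    rw [Real.sqrt_sq (norm_nonneg _)]
  have h2 : Tendsto (fun g => -‖(ξ : ∀ _ : G, ℂ) g‖) cofinite (nhds 0) := by
    simpa using h1.neg
  refine tendsto_of_tendsto_of_tendsto_of_le_of_le h2 h1 ?_ ?_
  · intro g
    dsimp only
    have h3 : |((ξ : ∀ _ : G, ℂ) g).re| ≤ ‖(ξ : ∀ _ : G, ℂ) g‖ := Complex.abs_re_le_norm _
    linarith [(abs_le.mp h3).1, (abs_le.mp h3).2]
  · intro g
    dsimp only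
    have h3 : |((ξ : ∀ _ : G, ℂ) g).re| ≤ ‖(ξ : ∀ _ : G, ℂ) g‖ := Complex.abs_re_le_norm _
    linarith [(abs_le.mp h3).1, (abs_le.mp h3).2]
section Core2

open Filter

variable {G : Type*} [Group G] {n : ℕ}

lemma psi_mem_Xf (f : Matrix (Fin n) (Fin n) (MonoidAlgebra ℤ G)) (η : Fin n → Fin n → G → ℝ)
    (h1R : ∀ i j g, ∑ k, (f i k).coeff.sum (fun h c => (c : ℝ) * η k j (h⁻¹ * g))
      = if i = j ∧ g = 1 then 1 else 0)
    (α : Fin n → MonoidAlgebra ℤ G) :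
    (fun l g => ((psiMap η α l g : ℝ) : AddCircle (1:ℝ))) ∈ Xf f := by
  intro β
  let q : ℝ →+ AddCircle (1:ℝ) := QuotientAddGroup.mk' _
  have hq : ∀ x : ℝ, ((x : ℝ) : AddCircle (1:ℝ)) = q x := fun _ => rfl
  calc ∑ l, Finsupp.sum (∑ k, β k * f k l).coeff
        (fun g c => c • ((psiMap η α l g : ℝ) : AddCircle (1:ℝ)))
      = ∑ l, ∑ k, (β k * f k l).coeff.sum
          (fun g c => c • ((psiMap η α l g : ℝ) : AddCircle (1:ℝ))) := by
        refine Finset.sum_congr rfl fun l _ => ?_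
        rw [MonoidAlgebra.coeff_sum]
        exact (Finsupp.sum_finset_sum_index
          (h := fun g c => c • ((psiMap η α l g : ℝ) : AddCircle (1:ℝ)))
          (fun g => zero_smul ℤ _) (fun g c1 c2 => add_smul c1 c2 _)).symm
    _ = ∑ l, ∑ k, ∑ h ∈ (β k).coeff.support, ∑ s ∈ (f k l).coeff.support,
          ((β k h) * (f k l s)) • ((psiMap η α l (h * s) : ℝ) : AddCircle (1:ℝ)) := by
        refine Finset.sum_congr rfl fun l _ => Finset.sum_congr rfl fun k _ => ?_
        exact malg_mul_sum (β k) (f k l) (fun g => ((psiMap η α l g : ℝ) : AddCircle (1:ℝ)))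
    _ = ∑ k, ∑ l, ∑ h ∈ (β k).coeff.support, ∑ s ∈ (f k l).coeff.support,
          ((β k h) * (f k l s)) • ((psiMap η α l (h * s) : ℝ) : AddCircle (1:ℝ)) :=
        Finset.sum_comm
    _ = ∑ k, ∑ h ∈ (β k).coeff.support, ∑ l, ∑ s ∈ (f k l).coeff.support,
          ((β k h) * (f k l s)) • ((psiMap η α l (h * s) : ℝ) : AddCircle (1:ℝ)) := by
        exact Finset.sum_congr rfl fun k _ => Finset.sum_comm
    _ = ∑ k, ∑ h ∈ (β k).coeff.support, (β k h) • q ((α k h : ℤ) : ℝ) := by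
        refine Finset.sum_congr rfl fun k _ => Finset.sum_congr rfl fun h _ => ?_
        calc ∑ l, ∑ s ∈ (f k l).coeff.support,
              ((β k h) * (f k l s)) • ((psiMap η α l (h * s) : ℝ) : AddCircle (1:ℝ))
            = ∑ l, ∑ s ∈ (f k l).coeff.support,
              (β k h) • q ((f k l s : ℝ) * psiMap η α l (h * s)) := by
              refine Finset.sum_congr rfl fun l _ => Finset.sum_congr rfl fun s _ => ?_
              rw [mul_smul, hq, ← map_zsmul q, zsmul_eq_mul]
          _ = (β k h) • q (∑ l, ∑ s ∈ (f k l).coeff.support,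
                (f k l s : ℝ) * psiMap η α l (h * s)) := by
              rw [map_sum, Finset.smul_sum]
              refine Finset.sum_congr rfl fun l _ => ?_
              rw [map_sum, Finset.smul_sum]
          _ = (β k h) • q ((α k h : ℤ) : ℝ) := by
              exact congrArg _ (congrArg q (Tpsi_eq f η h1R α k h))
    _ = 0 := by
        refine Finset.sum_eq_zero fun k _ => Finset.sum_eq_zero fun h _ => ?_
        rw [← hq, coe_int_real_eq_zero, smul_zero]

lemma psiMap_add (η : Fin n → Fin n → G → ℝ) (α α' : Fin n → MonoidAlgebra ℤ G) (l : Fin n) (g : G) :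
    psiMap η (α + α') l g = psiMap η α l g + psiMap η α' l g := by
  rw [psiMap, psiMap, psiMap, ← Finset.sum_add_distrib]
  refine Finset.sum_congr rfl fun m _ => ?_
  have : (α + α') m = α m + α' m := rfl
  rw [this, MonoidAlgebra.coeff_add, Finsupp.sum_add_index' (fun u => by norm_num) (fun u c1 c2 => by push_cast; ring)]

lemma psi_tendsto (η : Fin n → Fin n → G → ℝ)
    (hη : ∀ l m, Tendsto (η l m) cofinite (nhds 0)) (α : Fin n → MonoidAlgebra ℤ G) :
    Tendsto (fun g : G => (fun (l : Fin n) (h : G) =>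
      ((psiMap η α l (g⁻¹ * h) : ℝ) : AddCircle (1:ℝ)))) cofinite (nhds 0) := by
  rw [tendsto_pi_nhds]
  intro l
  rw [tendsto_pi_nhds]
  intro h
  have hreal : Tendsto (fun g : G => psiMap η α l (g⁻¹ * h)) cofinite (nhds 0) := by
    have : ∀ g : G, psiMap η α l (g⁻¹ * h)
        = ∑ m, ∑ u ∈ (α m).coeff.support, (α m u : ℝ) * η l m (h⁻¹ * g * u) := by
      intro g
      rw [psiMap]
      refine Finset.sum_congr rfl fun m _ => ?_
      rw [fsum_eq]
      refine Finset.sum_congr rfl fun u _ => ?_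
      congr 2
      rw [mul_inv_rev, inv_inv]
    rw [show (fun g : G => psiMap η α l (g⁻¹ * h))
        = fun g : G => ∑ m, ∑ u ∈ (α m).coeff.support, (α m u : ℝ) * η l m (h⁻¹ * g * u) from
        funext this]
    have hz : ∀ (m : Fin n) (u : G),
        Tendsto (fun g : G => (α m u : ℝ) * η l m (h⁻¹ * g * u)) cofinite (nhds 0) := by
      intro m u
      have hinj : Function.Injective (fun g : G => h⁻¹ * g * u) := by
        intro a b hab
        simpa using hab
      have := (hη l m).comp hinj.tendsto_cofinite
      have := this.const_mul ((α m u : ℤ) : ℝ)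
      simpa using this
    have htot := tendsto_finset_sum (Finset.univ : Finset (Fin n))
      (fun m _ => tendsto_finset_sum ((α m).coeff.support) (fun u _ => hz m u))
    simpa using htot
  have hcont : Continuous (fun x : ℝ => ((x : ℝ) : AddCircle (1:ℝ))) := continuous_quotient_mk'
  have := (hcont.tendsto 0).comp hreal
  simpa [Function.comp_def] using this

end Core2
section Core3

open Filter

variable {G : Type*} [Group G] {n : ℕ}

/-- `γ̃(m)(u) = ∑_{l,h} β_l(h) η_{lm}(h⁻¹u)`. -/
def gammaT (η : Fin n → Fin n → G → ℝ) (β : Fin n → MonoidAlgebra ℤ G) : Fin n → G → ℝ :=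
  fun m u => ∑ l, ∑ h ∈ (β l).coeff.support, (β l h : ℝ) * η l m (h⁻¹ * u)

lemma rpair_psi (η : Fin n → Fin n → G → ℝ) (β α : Fin n → MonoidAlgebra ℤ G) :
    rpair β (psiMap η α) = ∑ m, ∑ u ∈ (α m).coeff.support, (α m u : ℝ) * gammaT η β m u := by
  classical
  calc rpair β (psiMap η α)
      = ∑ l, ∑ h ∈ (β l).coeff.support, ∑ m, ∑ u ∈ (α m).coeff.support,
          (α m u : ℝ) * ((β l h : ℝ) * η l m (h⁻¹ * u)) := by
        rw [rpair]
        refine Finset.sum_congr rfl fun l _ => ?_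
        rw [fsum_eq]
        refine Finset.sum_congr rfl fun h _ => ?_
        rw [psiMap, Finset.mul_sum]
        refine Finset.sum_congr rfl fun m _ => ?_
        rw [fsum_eq, Finset.mul_sum]
        refine Finset.sum_congr rfl fun u _ => ?_
        ring
    _ = ∑ l, ∑ m, ∑ h ∈ (β l).coeff.support, ∑ u ∈ (α m).coeff.support,
          (α m u : ℝ) * ((β l h : ℝ) * η l m (h⁻¹ * u)) := by
        exact Finset.sum_congr rfl fun l _ => Finset.sum_comm
    _ = ∑ m, ∑ l, ∑ h ∈ (β l).coeff.support, ∑ u ∈ (α m).coeff.support,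
          (α m u : ℝ) * ((β l h : ℝ) * η l m (h⁻¹ * u)) := Finset.sum_comm
    _ = ∑ m, ∑ l, ∑ u ∈ (α m).coeff.support, ∑ h ∈ (β l).coeff.support,
          (α m u : ℝ) * ((β l h : ℝ) * η l m (h⁻¹ * u)) := by
        exact Finset.sum_congr rfl fun m _ => Finset.sum_congr rfl fun l _ => Finset.sum_comm
    _ = ∑ m, ∑ u ∈ (α m).coeff.support, ∑ l, ∑ h ∈ (β l).coeff.support,
          (α m u : ℝ) * ((β l h : ℝ) * η l m (h⁻¹ * u)) := by
        exact Finset.sum_congr rfl fun m _ => Finset.sum_comm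
    _ = ∑ m, ∑ u ∈ (α m).coeff.support, (α m u : ℝ) * gammaT η β m u := by
        refine Finset.sum_congr rfl fun m _ => Finset.sum_congr rfl fun u _ => ?_
        rw [gammaT, Finset.mul_sum]
        refine Finset.sum_congr rfl fun l _ => ?_
        rw [Finset.mul_sum]

lemma ann_vanish (f : Matrix (Fin n) (Fin n) (MonoidAlgebra ℤ G)) (η : Fin n → Fin n → G → ℝ)
    (h2R : ∀ i j g, ∑ k, (f k j).coeff.sum (fun h c => η i k (g * h⁻¹) * (c : ℝ))
      = if i = j ∧ g = 1 then 1 else 0)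
    (hη : ∀ l m, Tendsto (η l m) cofinite (nhds 0))
    (θ : Fin n → G → AddCircle (1:ℝ)) (hθ : θ ∈ Xf f) (β : Fin n → MonoidAlgebra ℤ G)
    (hann : ∀ α : Fin n → MonoidAlgebra ℤ G,
      (∑ l, (β l).coeff.sum fun g c => c • ((psiMap η α l g : ℝ) : AddCircle (1:ℝ))) = 0) :
    (∑ l, (β l).coeff.sum fun g c => c • θ l g) = 0 := by
  classical
  -- Step B : integrality of gammaT
  have hB : ∀ m u, ∃ z : ℤ, gammaT η β m u = (z : ℝ) := by
    intro m u
    set α : Fin n → MonoidAlgebra ℤ G :=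
      fun m' => if m' = m then MonoidAlgebra.ofCoeff (Finsupp.single u 1) else 0 with hα
    have h0 := hann α
    rw [tpair_eq_rpair β (psiMap η α)] at h0
    rw [AddCircle.coe_eq_zero_iff] at h0
    obtain ⟨z, hz⟩ := h0
    refine ⟨z, ?_⟩
    have hr : rpair β (psiMap η α) = gammaT η β m u := by
      rw [rpair_psi]
      rw [Finset.sum_eq_single m]
      · have hm : α m = MonoidAlgebra.ofCoeff (Finsupp.single u 1) := by simp [hα]
        rw [hm, MonoidAlgebra.coeff_ofCoeff, Finsupp.support_single_ne_zero u one_ne_zero]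
        rw [Finset.sum_singleton, Finsupp.single_eq_same]
        simp
      · intro m' _ hm'
        have : α m' = 0 := by simp [hα, hm']
        rw [this]
        simp
      · intro hmem
        exact absurd (Finset.mem_univ m) hmem
    rw [← hr, ← hz]
    simp
  -- Step C : decay of gammaT
  have hC : ∀ m, Tendsto (gammaT η β m) cofinite (nhds 0) := by
    intro m
    have : gammaT η β m = fun u => ∑ l, ∑ h ∈ (β l).coeff.support, (β l h : ℝ) * η l m (h⁻¹ * u) := rfl
    rw [this]
    have htot := tendsto_finset_sum (Finset.univ : Finset (Fin n)) (fun l _ =>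
      tendsto_finset_sum ((β l).coeff.support) (fun h _ => by
        have hinj : Function.Injective (fun u : G => h⁻¹ * u) := fun a b hab => by simpa using hab
        have h2 := ((hη l m).comp hinj.tendsto_cofinite).const_mul ((β l h : ℤ) : ℝ)
        simpa using h2))
    simpa using htot
  -- Step D : the integer vector γ
  have hD : ∀ m, (Function.support (fun u => ⌊gammaT η β m u⌋)).Finite := by
    intro m
    have hev : {u : G | ¬ |gammaT η β m u| < 1}.Finite := by
      have h1 : ∀ᶠ u in cofinite, |gammaT η β m u| < 1 := by
        have := Metric.tendsto_nhds.mp (hC m) 1 one_pos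
        simpa [Real.dist_eq] using this
      exact eventually_cofinite.mp h1
    refine hev.subset ?_
    intro u hu
    simp only [Function.mem_support] at hu
    intro hlt
    obtain ⟨z, hz⟩ := hB m u
    have hz1 : |(z : ℝ)| < 1 := by rw [← hz]; exact hlt
    have hz2 : z = 0 := by
      have h4 : |z| < 1 := by exact_mod_cast hz1
      have h5 := abs_lt.mp h4
      omega
    apply hu
    rw [hz, hz2, Int.cast_zero, Int.floor_zero]
  set γ : Fin n → MonoidAlgebra ℤ G :=
    fun m => MonoidAlgebra.ofCoeff (Finsupp.ofSupportFinite (fun u => ⌊gammaT η β m u⌋) (hD m)) with hγ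
  have hγval : ∀ m u, ((γ m u : ℤ) : ℝ) = gammaT η β m u := by
    intro m u
    obtain ⟨z, hz⟩ := hB m u
    have h1 : γ m u = ⌊gammaT η β m u⌋ := rfl
    rw [h1, hz, Int.floor_intCast]
  -- Step E : r(f) γ = β
  have hE : ∀ l, (∑ m, γ m * f m l) = β l := by
    intro l
    ext g
    have hcast : (((∑ m, γ m * f m l) g : ℤ) : ℝ) = ((β l g : ℤ) : ℝ) := by
      calc (((∑ m, γ m * f m l) g : ℤ) : ℝ)
          = ∑ m, ∑ s ∈ (f m l).coeff.support, gammaT η β m (g * s⁻¹) * (f m l s : ℝ) := by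
            rw [MonoidAlgebra.coeff_sum, Finsupp.finset_sum_apply, Int.cast_sum]
            refine Finset.sum_congr rfl fun m _ => ?_
            rw [malg_mul_apply_right, fsum_eq, Int.cast_sum]
            refine Finset.sum_congr rfl fun s _ => ?_
            rw [Int.cast_mul, hγval]
        _ = ∑ m, ∑ s ∈ (f m l).coeff.support, (∑ l', ∑ h ∈ (β l').coeff.support,
              (β l' h : ℝ) * η l' m (h⁻¹ * (g * s⁻¹))) * (f m l s : ℝ) := rfl
        _ = ∑ m, ∑ s ∈ (f m l).coeff.support, ∑ l', ∑ h ∈ (β l').coeff.support,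
              (β l' h : ℝ) * (η l' m ((h⁻¹ * g) * s⁻¹) * (f m l s : ℝ)) := by
            refine Finset.sum_congr rfl fun m _ => Finset.sum_congr rfl fun s _ => ?_
            rw [Finset.sum_mul]
            refine Finset.sum_congr rfl fun l' _ => ?_
            rw [Finset.sum_mul]
            refine Finset.sum_congr rfl fun h _ => ?_
            have hassoc : h⁻¹ * (g * s⁻¹) = h⁻¹ * g * s⁻¹ := (mul_assoc _ _ _).symm
            rw [hassoc, mul_assoc]
        _ = ∑ m, ∑ l', ∑ s ∈ (f m l).coeff.support, ∑ h ∈ (β l').coeff.support,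
              (β l' h : ℝ) * (η l' m ((h⁻¹ * g) * s⁻¹) * (f m l s : ℝ)) := by
            exact Finset.sum_congr rfl fun m _ => Finset.sum_comm
        _ = ∑ l', ∑ m, ∑ s ∈ (f m l).coeff.support, ∑ h ∈ (β l').coeff.support,
              (β l' h : ℝ) * (η l' m ((h⁻¹ * g) * s⁻¹) * (f m l s : ℝ)) := Finset.sum_comm
        _ = ∑ l', ∑ m, ∑ h ∈ (β l').coeff.support, ∑ s ∈ (f m l).coeff.support,
              (β l' h : ℝ) * (η l' m ((h⁻¹ * g) * s⁻¹) * (f m l s : ℝ)) := by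
            exact Finset.sum_congr rfl fun l' _ => Finset.sum_congr rfl fun m _ => Finset.sum_comm
        _ = ∑ l', ∑ h ∈ (β l').coeff.support, ∑ m, ∑ s ∈ (f m l).coeff.support,
              (β l' h : ℝ) * (η l' m ((h⁻¹ * g) * s⁻¹) * (f m l s : ℝ)) := by
            exact Finset.sum_congr rfl fun l' _ => Finset.sum_comm
        _ = ∑ l', ∑ h ∈ (β l').coeff.support, (β l' h : ℝ) *
              (if l' = l ∧ (h⁻¹ * g) = 1 then (1:ℝ) else 0) := by
            refine Finset.sum_congr rfl fun l' _ => Finset.sum_congr rfl fun h _ => ?_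
            have hfac : ∑ m, ∑ s ∈ (f m l).coeff.support,
                (β l' h : ℝ) * (η l' m ((h⁻¹ * g) * s⁻¹) * (f m l s : ℝ))
                = (β l' h : ℝ) * ∑ m, ∑ s ∈ (f m l).coeff.support,
                    η l' m ((h⁻¹ * g) * s⁻¹) * (f m l s : ℝ) := by
              rw [Finset.mul_sum]
              exact Finset.sum_congr rfl fun m _ => by rw [Finset.mul_sum]
            rw [hfac]
            congr 1
            exact (Finset.sum_congr rfl fun m _ => by rw [fsum_eq]).trans (h2R l' l (h⁻¹ * g))
        _ = ((β l g : ℤ) : ℝ) := by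
            have hsplit : ∀ (l' : Fin n) (h : G),
                (β l' h : ℝ) * (if l' = l ∧ (h⁻¹ * g) = 1 then (1:ℝ) else 0)
                = (if l = l' then (1:ℝ) else 0) * (if h = g then (β l' h : ℝ) else 0) := by
              intro l' h
              rw [ite_and_split]
              have hcond : ((h⁻¹ * g = 1) = (h = g)) := by
                simp [inv_mul_eq_one]
              rw [hcond]
              by_cases h1 : l = l' <;> by_cases h2 : h = g <;> simp [h1, h2] <;> ring
            rw [Finset.sum_congr rfl (fun l' _ => Finset.sum_congr rfl (fun h _ => hsplit l' h))]
            have hinner : ∀ l', ∑ h ∈ (β l').coeff.support,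
                (if l = l' then (1:ℝ) else 0) * (if h = g then (β l' h : ℝ) else 0)
                = (if l = l' then (1:ℝ) else 0) * (β l' g : ℝ) := by
              intro l'
              rw [← Finset.mul_sum, Finset.sum_ite_eq']
              by_cases hg : g ∈ (β l').coeff.support
              · rw [if_pos hg]
              · rw [if_neg hg, Finsupp.notMem_support_iff.mp hg, Int.cast_zero]
            rw [Finset.sum_congr rfl (fun l' _ => hinner l')]
            simp only [ite_mul, one_mul, zero_mul]
            rw [Finset.sum_ite_eq Finset.univ l (fun l' => ((β l' g : ℤ) : ℝ))]
            simp
    exact_mod_cast hcast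
  have hfinal := hθ γ
  have hrw : ∀ l, (Finsupp.sum (∑ k, γ k * f k l).coeff fun g c => c • θ l g)
      = (β l).coeff.sum fun g c => c • θ l g := by
    intro l
    rw [hE l]
  rw [Finset.sum_congr rfl (fun l _ => hrw l)] at hfinal
  exact hfinal

end Core3

/-- If `f ∈ M_n(ℤ[G])` admits an ℓ² formal inverse, then the homoclinic group
`Δ(X_f) = {θ ∈ X_f : g·θ → 0 along the cofinite filter}` is dense in `X_f`, where
`(g·θ)(l)(h) = θ(l)(g⁻¹h)` and convergence is in the product topology. -/
theorem homoclinic_dense {G : Type*} [Group G] [Countable G] {n : ℕ}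
    (f : Matrix (Fin n) (Fin n) (MonoidAlgebra ℤ G))
    (hinv : ∃ ξ : Matrix (Fin n) (Fin n) (lp (fun _ : G => ℂ) 2),
      matConv (fun i j => castZC (f i j)) (fun i j => ⇑(ξ i j)) = oneHat G n ∧
      matConvR (fun i j => ⇑(ξ i j)) (fun i j => castZC (f i j)) = oneHat G n) :
    Xf f ⊆ closure {θ : Fin n → G → AddCircle (1 : ℝ) |
      θ ∈ Xf f ∧ Filter.Tendsto (fun g : G => (fun (l : Fin n) (h : G) => θ l (g⁻¹ * h)))
        Filter.cofinite (nhds 0)} := by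
  classical
  obtain ⟨ξ, hmc, hmcr⟩ := hinv
  intro θ hθmem
  set η : Fin n → Fin n → G → ℝ := fun i j g => ((ξ i j : ∀ _ : G, ℂ) g).re with hηdef
  -- real versions of the inverse identities
  have h1R : ∀ i j g, ∑ k, (f i k).coeff.sum (fun h c => (c : ℝ) * η k j (h⁻¹ * g))
      = if i = j ∧ g = 1 then 1 else 0 := by
    intro i j g
    have h0' : ∑ k, ((f i k).coeff.sum fun h c => ((c : ℤ) : ℂ) * (ξ k j : ∀ _ : G, ℂ) (h⁻¹ * g))
        = (if i = j ∧ g = 1 then (1:ℂ) else 0) := by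
      calc ∑ k, ((f i k).coeff.sum fun h c => ((c : ℤ) : ℂ) * (ξ k j : ∀ _ : G, ℂ) (h⁻¹ * g))
          = ∑ k, fconv (castZC (f i k)) (⇑(ξ k j)) g := by
            refine Finset.sum_congr rfl fun k _ => ?_
            rw [fconv, castZC, Finsupp.sum_mapRange_index (fun h => by simp)]
        _ = matConv (fun i j => castZC (f i j)) (fun i j => ⇑(ξ i j)) i j g := by
            simp only [matConv, Finset.sum_apply]
        _ = oneHat G n i j g := by rw [hmc]
        _ = if i = j ∧ g = 1 then 1 else 0 := rfl
    calc ∑ k, (f i k).coeff.sum (fun h c => (c : ℝ) * η k j (h⁻¹ * g))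
        = (∑ k, ((f i k).coeff.sum fun h c => ((c : ℤ) : ℂ) * (ξ k j : ∀ _ : G, ℂ) (h⁻¹ * g))).re := by
          rw [Complex.re_sum]
          refine Finset.sum_congr rfl fun k _ => ?_
          rw [fsum_eq, fsum_eq, Complex.re_sum]
          refine Finset.sum_congr rfl fun h _ => ?_
          simp [Complex.mul_re, hηdef]
      _ = (if i = j ∧ g = 1 then (1:ℂ) else 0).re := by rw [h0']
      _ = if i = j ∧ g = 1 then 1 else 0 := by
          by_cases hij : i = j ∧ g = 1 <;> simp [hij]
  have h2R : ∀ i j g, ∑ k, (f k j).coeff.sum (fun h c => η i k (g * h⁻¹) * (c : ℝ))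
      = if i = j ∧ g = 1 then 1 else 0 := by
    intro i j g
    have h0' : ∑ k, ((f k j).coeff.sum fun h c => (ξ i k : ∀ _ : G, ℂ) (g * h⁻¹) * ((c : ℤ) : ℂ))
        = (if i = j ∧ g = 1 then (1:ℂ) else 0) := by
      calc ∑ k, ((f k j).coeff.sum fun h c => (ξ i k : ∀ _ : G, ℂ) (g * h⁻¹) * ((c : ℤ) : ℂ))
          = ∑ k, fconvR (⇑(ξ i k)) (castZC (f k j)) g := by
            refine Finset.sum_congr rfl fun k _ => ?_
            rw [fconvR, castZC, Finsupp.sum_mapRange_index (fun h => by simp)]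
        _ = matConvR (fun i j => ⇑(ξ i j)) (fun i j => castZC (f i j)) i j g := by
            simp only [matConvR, Finset.sum_apply]
        _ = oneHat G n i j g := by rw [hmcr]
        _ = if i = j ∧ g = 1 then 1 else 0 := rfl
    calc ∑ k, (f k j).coeff.sum (fun h c => η i k (g * h⁻¹) * (c : ℝ))
        = (∑ k, ((f k j).coeff.sum fun h c => (ξ i k : ∀ _ : G, ℂ) (g * h⁻¹) * ((c : ℤ) : ℂ))).re := by
          rw [Complex.re_sum]
          refine Finset.sum_congr rfl fun k _ => ?_
          rw [fsum_eq, fsum_eq, Complex.re_sum]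
          refine Finset.sum_congr rfl fun h _ => ?_
          simp [Complex.mul_re, hηdef]
      _ = (if i = j ∧ g = 1 then (1:ℂ) else 0).re := by rw [h0']
      _ = if i = j ∧ g = 1 then 1 else 0 := by
          by_cases hij : i = j ∧ g = 1 <;> simp [hij]
  have hη : ∀ l m, Filter.Tendsto (η l m) Filter.cofinite (nhds 0) := fun l m =>
    re_tendsto_cofinite (ξ l m)
  -- the coercion hom
  let q : ℝ →+ AddCircle (1:ℝ) := QuotientAddGroup.mk' _
  -- transport between curried and uncurried products
  let e : (Fin n → G → AddCircle (1:ℝ)) → ((Fin n × G) → AddCircle (1:ℝ)) :=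
    fun ϑ p => ϑ p.1 p.2
  let e' : ((Fin n × G) → AddCircle (1:ℝ)) → (Fin n → G → AddCircle (1:ℝ)) :=
    fun ϑ l g => ϑ (l, g)
  have he' : Continuous e' := continuous_pi fun l => continuous_pi fun g => continuous_apply (l, g)
  -- the subgroup of homoclinic points coming from psiMap
  let Ψ : (Fin n → MonoidAlgebra ℤ G) →+ ((Fin n × G) → AddCircle (1:ℝ)) :=
    AddMonoidHom.mk' (fun α p => ((psiMap η α p.1 p.2 : ℝ) : AddCircle (1:ℝ)))
      (fun α α' => funext fun p => by
        show ((psiMap η (α + α') p.1 p.2 : ℝ) : AddCircle (1:ℝ)) = _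
        rw [psiMap_add]
        exact map_add q _ _)
  let H : AddSubgroup ((Fin n × G) → AddCircle (1:ℝ)) := Ψ.range
  -- e θ is in the closure of H
  have hmemcl : e θ ∈ closure (H : Set ((Fin n × G) → AddCircle (1:ℝ))) := by
    apply mem_closure_of_char
    intro χ hχann
    -- package χ into a vector of MonoidAlgebras
    have hfin : ∀ l : Fin n, (Function.support fun g => χ (l, g)).Finite := by
      intro l
      have : (Function.support fun g => χ (l, g)) ⊆
          (fun g => ((l, g) : Fin n × G)) ⁻¹' (χ.support : Set (Fin n × G)) := by
        intro g hg
        simpa using hg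
      refine Set.Finite.subset ?_ this
      exact Set.Finite.preimage (fun a _ b _ hab => by simpa using hab)
        (χ.support.finite_toSet)
    let β : Fin n → MonoidAlgebra ℤ G := fun l => MonoidAlgebra.ofCoeff (Finsupp.ofSupportFinite _ (hfin l))
    have hβ : ∀ l g, β l g = χ (l, g) := fun l g => rfl
    -- conversion between the two pairings
    have hconv : ∀ ϑ : (Fin n × G) → AddCircle (1:ℝ),
        (χ.sum fun p c => c • ϑ p) = ∑ l, (β l).coeff.sum fun g c => c • ϑ (l, g) := by
      intro ϑ
      set T : Finset G := χ.support.image Prod.snd with hT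
      have hsupβ : ∀ l : Fin n, (β l).coeff.support ⊆ T := by
        intro l g hg
        rw [Finsupp.mem_support_iff] at hg
        rw [hβ] at hg
        exact Finset.mem_image.mpr ⟨(l, g), Finsupp.mem_support_iff.mpr hg, rfl⟩
      have hR : (∑ l, (β l).coeff.sum fun g c => c • ϑ (l, g))
          = ∑ l, ∑ g ∈ T, χ (l, g) • ϑ (l, g) := by
        refine Finset.sum_congr rfl fun l _ => ?_
        rw [Finsupp.sum_of_support_subset (β l).coeff (hsupβ l)
          (fun g c => c • ϑ (l, g)) (fun g _ => zero_smul ℤ _)]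
        rfl
      have hprod : ∑ p ∈ (Finset.univ ×ˢ T : Finset (Fin n × G)), χ p • ϑ p
          = ∑ l, ∑ g ∈ T, χ (l, g) • ϑ (l, g) :=
        Finset.sum_product Finset.univ T (fun p => χ p • ϑ p)
      rw [hR, ← hprod]
      rw [Finsupp.sum]
      refine Finset.sum_subset ?_ ?_
      · intro p hp
        rw [Finset.mem_product]
        refine ⟨Finset.mem_univ _, ?_⟩
        exact Finset.mem_image.mpr ⟨p, hp, rfl⟩
      · intro p _ hp
        rw [Finsupp.notMem_support_iff.mp hp, zero_smul]
    -- the annihilation hypothesis in vector form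
    have hann : ∀ α : Fin n → MonoidAlgebra ℤ G,
        (∑ l, (β l).coeff.sum fun g c => c • ((psiMap η α l g : ℝ) : AddCircle (1:ℝ))) = 0 := by
      intro α
      have h1 := hχann (Ψ α) ⟨α, rfl⟩
      rw [hconv (Ψ α)] at h1
      exact h1
    have hvan := ann_vanish f η h2R hη θ hθmem β hann
    rw [hconv (e θ)]
    exact hvan
  -- pull back along e'
  have hθcl : θ ∈ closure (e' '' (H : Set ((Fin n × G) → AddCircle (1:ℝ)))) := by
    have h1 : θ ∈ e' '' closure (H : Set ((Fin n × G) → AddCircle (1:ℝ))) :=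
      ⟨e θ, hmemcl, rfl⟩
    exact image_closure_subset_closure_image he' h1
  refine closure_mono ?_ hθcl
  rintro ϑ ⟨ϑ', ⟨α, rfl⟩, rfl⟩
  constructor
  · exact psi_mem_Xf f η h1R α
  · exact psi_tendsto η hη α
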